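/- Let φ be the anti-automorphism of H_n(0) determined by φ(T_i) = T_i for all i. Then for every permutation τ ∈ S_n (used as the word of spectral parameters) and every σ ∈ S_n, one has φ(Y_σ(τ)) = Y_{σ^{-1}}( \overline{τ}^{\#} · (σ^{-1})^{\#} ), where for a permutation π, \overline{π} := π ω_n, π^{\#} := ω_n π, ω_n = (n, n-1, …, 1) is the longest permutation, and the products are compositions of permutations. -/

import Mathlib

/-!
STATEMENT 3: Let `φ` be the anti-automorphism of `H_n(0)` determined by
`φ(T_i) = T_i` for all `i`.  Then for every permutation `τ ∈ S_n` (used as the word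
of spectral parameters) and every `σ ∈ S_n`, one has
`φ(Y_σ(τ)) = Y_{σ⁻¹}( ‾τ^# · (σ⁻¹)^# )`,
where `‾π := π ω_n`, `π^# := ω_n π`, and `ω_n = (n, n-1, …, 1)` is the longest
permutation (`Fin.revPerm`).

An anti-automorphism is encoded as a `ℂ`-algebra morphism `H_n(0) →ₐ[ℂ] H_n(0)ᵐᵒᵖ`;
the Yang-Baxter basis is encoded by quantifying over any family `Y` satisfying its
defining recursion (`IsYBFamily`), which determines it uniquely.
-/

namespace AKSPaper

noncomputable section

/-- Defining relations of the 0-Hecke algebra `H_n(0)`.  The generator indexed by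
`i : Fin (n-1)` is `T_{i+1}` (1-indexed), acting on 0-indexed positions `i, i+1`. -/
inductive HeckeRel (n : ℕ) :
    FreeAlgebra ℂ (Fin (n - 1)) → FreeAlgebra ℂ (Fin (n - 1)) → Prop
  | quad (i : Fin (n - 1)) :
      HeckeRel n (FreeAlgebra.ι ℂ i * (1 + FreeAlgebra.ι ℂ i)) 0
  | braid (i j : Fin (n - 1)) (h : (i : ℕ) + 1 = j) :
      HeckeRel n (FreeAlgebra.ι ℂ i * FreeAlgebra.ι ℂ j * FreeAlgebra.ι ℂ i)
        (FreeAlgebra.ι ℂ j * FreeAlgebra.ι ℂ i * FreeAlgebra.ι ℂ j)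
  | comm (i j : Fin (n - 1)) (h : (i : ℕ) + 2 ≤ j ∨ (j : ℕ) + 2 ≤ i) :
      HeckeRel n (FreeAlgebra.ι ℂ i * FreeAlgebra.ι ℂ j)
        (FreeAlgebra.ι ℂ j * FreeAlgebra.ι ℂ i)

/-- The 0-Hecke algebra `H_n(0)`. -/
abbrev H (n : ℕ) := RingQuot (HeckeRel n)

/-- The generator `T_{i+1}` of `H_n(0)`. -/
def Tgen {n : ℕ} (i : Fin (n - 1)) : H n :=
  RingQuot.mkAlgHom ℂ (HeckeRel n) (FreeAlgebra.ι ℂ i)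

/-- The generator `T` acting on the 0-indexed positions `j`, `j+1`. -/
def Tpos {n : ℕ} (j : ℕ) (h : j + 1 < n) : H n := Tgen ⟨j, by omega⟩

/-- The elementary transposition exchanging the 0-indexed positions `j`, `j+1`. -/
def sw {n : ℕ} (j : ℕ) (h : j + 1 < n) : Equiv.Perm (Fin n) :=
  Equiv.swap ⟨j, by omega⟩ ⟨j + 1, h⟩

/-- The number of inversions of a permutation. -/
def invnum {n : ℕ} (σ : Equiv.Perm (Fin n)) : ℕ :=
  (Finset.univ.filter fun p : Fin n × Fin n => p.1 < p.2 ∧ σ p.2 < σ p.1).card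

/-- The Yang-Baxter element `Y_j(t, u)`: `T_j` if `t > u`, `1 + T_j` if `t ≤ u`. -/
def Ygen {n : ℕ} {α : Type*} [LinearOrder α] (j : ℕ) (h : j + 1 < n) (t u : α) : H n :=
  if t ≤ u then 1 + Tpos j h else Tpos j h

/-- `Y` is the family of Yang-Baxter basis elements: `Y_id(x) = 1` and
`Y_{s_j τ}(x) = Y_j(x_{τ⁻¹(j)}, x_{τ⁻¹(j+1)}) * Y_τ(x)` whenever `s_j τ` has one more
inversion than `τ`. -/
def IsYBFamily {n : ℕ} {α : Type*} [LinearOrder α]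
    (Y : Equiv.Perm (Fin n) → (Fin n → α) → H n) : Prop :=
  (∀ x, Y 1 x = 1) ∧
  ∀ (j : ℕ) (h : j + 1 < n) (τ : Equiv.Perm (Fin n)) (x : Fin n → α),
    invnum (sw j h * τ) = invnum τ + 1 →
    Y (sw j h * τ) x =
      Ygen j h (x (τ⁻¹ ⟨j, by omega⟩)) (x (τ⁻¹ ⟨j + 1, h⟩)) * Y τ x

/-- `i` (0-indexed, `i+1 < n`) is a descent of the permutation `σ`. -/
def descPerm {n : ℕ} (σ : Equiv.Perm (Fin n)) (i : ℕ) : Prop :=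
  ∃ h : i + 1 < n, σ ⟨i + 1, h⟩ < σ ⟨i, by omega⟩

variable {n : ℕ}

lemma sw_lt_sw {n : ℕ} {j : ℕ} (h : j + 1 < n) {u v : Fin n}
    (h1 : ¬(u = ⟨j, by omega⟩ ∧ v = ⟨j + 1, h⟩))
    (h2 : ¬(v = ⟨j, by omega⟩ ∧ u = ⟨j + 1, h⟩)) :
    sw j h u < sw j h v ↔ u < v := by
  rcases u with ⟨u, hu⟩; rcases v with ⟨v, hv⟩
  simp only [sw, Equiv.swap_apply_def, Fin.mk.injEq, Fin.lt_def] at h1 h2 ⊢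
  split_ifs <;> simp only [Fin.lt_def] <;> omega

lemma sw_sw {n : ℕ} {j : ℕ} (h : j + 1 < n) (v : Fin n) : sw j h (sw j h v) = v :=
  Equiv.swap_apply_self _ _ _

lemma sw_mul_sw {n : ℕ} {j : ℕ} (h : j + 1 < n) (π : Equiv.Perm (Fin n)) :
    sw j h * (sw j h * π) = π := by
  ext v; simp [Equiv.Perm.mul_apply, sw_sw]

lemma sw_inv {n : ℕ} {j : ℕ} (h : j + 1 < n) : (sw j h)⁻¹ = sw j h := by
  simp [sw]

lemma invnum_sw_mul {n : ℕ} {j : ℕ} (h : j + 1 < n) (π : Equiv.Perm (Fin n))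
    (hd : π⁻¹ ⟨j, by omega⟩ < π⁻¹ ⟨j + 1, h⟩) :
    invnum (sw j h * π) = invnum π + 1 := by
  set a : Fin n := π⁻¹ ⟨j, by omega⟩ with ha
  set b : Fin n := π⁻¹ ⟨j + 1, h⟩ with hb
  have hpa : π a = ⟨j, by omega⟩ := Equiv.apply_symm_apply π _
  have hpb : π b = ⟨j + 1, h⟩ := Equiv.apply_symm_apply π _
  have key : (Finset.univ.filter fun p : Fin n × Fin n =>
        p.1 < p.2 ∧ (sw j h * π) p.2 < (sw j h * π) p.1) =
      insert (a, b) (Finset.univ.filter fun p : Fin n × Fin n =>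
        p.1 < p.2 ∧ π p.2 < π p.1) := by
    refine Finset.ext fun p => ?_
    simp only [Finset.mem_insert, Finset.mem_filter, Finset.mem_univ, true_and]
    simp only [Equiv.Perm.mul_apply]
    constructor
    · rintro ⟨hlt, hswlt⟩
      by_cases hp : p = (a, b)
      · exact Or.inl hp
      · refine Or.inr ⟨hlt, ?_⟩
        rw [sw_lt_sw h ?_ ?_] at hswlt
        · exact hswlt
        · rintro ⟨e1, e2⟩
          have : p.2 = a := by rw [ha]; rw [← e1]; simp
          have : p.1 = b := by rw [hb]; rw [← e2]; simp
          apply absurd hd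
          simp only [not_lt]
          calc b = p.1 := this.symm
            _ ≤ a := le_of_lt (by rwa [‹p.2 = a›] at hlt)
        · rintro ⟨e1, e2⟩
          apply hp
          have hp1 : p.1 = a := by rw [ha, ← e1]; simp
          have hp2 : p.2 = b := by rw [hb, ← e2]; simp
          exact Prod.ext hp1 hp2
    · rintro (hp | ⟨hlt, hπlt⟩)
      · subst hp
        refine ⟨hd, ?_⟩
        simp only [hpa, hpb, sw, Equiv.swap_apply_left, Equiv.swap_apply_right]
        simp [Fin.lt_def]
      · refine ⟨hlt, ?_⟩
        rw [sw_lt_sw h ?_ ?_]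
        · exact hπlt
        · rintro ⟨e1, e2⟩
          have hp2 : p.2 = a := by rw [ha, ← e1]; simp
          have hp1 : p.1 = b := by rw [hb, ← e2]; simp
          apply absurd hd; simp only [not_lt]
          exact le_of_lt (by rw [← hp2, ← hp1]; exact hlt)
        · rintro ⟨e1, e2⟩
          have hp1 : p.1 = a := by rw [ha, ← e1]; simp
          have hp2 : p.2 = b := by rw [hb, ← e2]; simp
          rw [hp1, hp2, hpa, hpb] at hπlt
          exact absurd hπlt (by simp [Fin.lt_def])
  have hnotmem : (a, b) ∉ (Finset.univ.filter fun p : Fin n × Fin n =>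
      p.1 < p.2 ∧ π p.2 < π p.1) := by
    simp only [Finset.mem_filter, Finset.mem_univ, true_and, not_and]
    intro _
    rw [hpa, hpb]
    simp [Fin.lt_def]
  rw [invnum, key, Finset.card_insert_of_notMem hnotmem, invnum]

lemma invnum_inv {n : ℕ} (σ : Equiv.Perm (Fin n)) : invnum σ⁻¹ = invnum σ := by
  unfold invnum
  apply Finset.card_bij' (i := fun p _ => (σ⁻¹ p.2, σ⁻¹ p.1)) (j := fun p _ => (σ p.2, σ p.1)) <;>
    simp +contextual

lemma exists_descent {n : ℕ} (σ : Equiv.Perm (Fin n)) (hσ : σ ≠ 1) :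
    ∃ (j : ℕ) (h : j + 1 < n), σ ⟨j + 1, h⟩ < σ ⟨j, by omega⟩ := by
  by_contra hc
  push_neg at hc
  apply hσ
  have hmono : StrictMono σ := by
    cases n with
    | zero => intro a; exact absurd a.2 (by omega)
    | succ m =>
      rw [Fin.strictMono_iff_lt_succ]
      intro i
      have hi : (i : ℕ) + 1 < m + 1 := by omega
      have := hc i hi
      have hne : σ ⟨(i : ℕ), by omega⟩ ≠ σ ⟨(i : ℕ) + 1, hi⟩ :=
        fun e => by have := σ.injective e; simp [Fin.ext_iff] at this
      have h1 : σ (Fin.castSucc i) = σ ⟨(i : ℕ), by omega⟩ := by congr 1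
      have h2 : σ i.succ = σ ⟨(i : ℕ) + 1, hi⟩ := by congr 1
      rw [h1, h2]
      exact lt_of_le_of_ne this hne
  have hid : StrictMono (id : Fin n → Fin n) := strictMono_id
  have inst : WellFoundedLT (Fin n) := inferInstance
  have hr : ⇑σ = (id : Fin n → Fin n) :=
    (@StrictMono.range_inj (Fin n) (Fin n) _ _ inst _ _ hmono hid).1
      (by rw [σ.surjective.range_eq, Set.range_id])
  exact Equiv.ext fun v => by simpa using congrFun hr v




lemma sw_apply_left {j : ℕ} (h : j + 1 < n) : sw j h ⟨j, by omega⟩ = ⟨j + 1, h⟩ :=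
  Equiv.swap_apply_left _ _

lemma sw_apply_right {j : ℕ} (h : j + 1 < n) : sw j h ⟨j + 1, h⟩ = ⟨j, by omega⟩ :=
  Equiv.swap_apply_right _ _

lemma invnum_sw_mul_cases {j : ℕ} (h : j + 1 < n) (π : Equiv.Perm (Fin n)) :
    invnum (sw j h * π) = invnum π + 1 ∨ invnum π = invnum (sw j h * π) + 1 := by
  by_cases hd : π⁻¹ ⟨j, by omega⟩ < π⁻¹ ⟨j + 1, h⟩
  · exact Or.inl (invnum_sw_mul h π hd)
  · right
    have hne : π⁻¹ (⟨j, by omega⟩ : Fin n) ≠ π⁻¹ ⟨j + 1, h⟩ := by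
      intro e
      have := π⁻¹.injective e
      simp [Fin.ext_iff] at this
    have hd' : π⁻¹ (⟨j + 1, h⟩ : Fin n) < π⁻¹ ⟨j, by omega⟩ :=
      lt_of_le_of_ne (not_lt.1 hd) hne.symm
    have hρ : (sw j h * π)⁻¹ (⟨j, by omega⟩ : Fin n) < (sw j h * π)⁻¹ ⟨j + 1, h⟩ := by
      have e1 : (sw j h * π)⁻¹ = π⁻¹ * sw j h := by rw [mul_inv_rev, sw_inv]
      rw [e1]
      simpa [Equiv.Perm.mul_apply, sw_apply_left h, sw_apply_right h] using hd'
    have := invnum_sw_mul h (sw j h * π) hρ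
    rwa [sw_mul_sw] at this

lemma Ygen_rev {j : ℕ} (h : j + 1 < n) {m : ℕ} (t u : Fin m) :
    Ygen j h (Fin.rev u) (Fin.rev t) = Ygen j h t u := by
  simp only [Ygen, Fin.rev_le_rev]

lemma Y_right {α : Type*} [LinearOrder α] {Y : Equiv.Perm (Fin n) → (Fin n → α) → H n}
    (hY : IsYBFamily Y) :
    ∀ (m : ℕ) (σ : Equiv.Perm (Fin n)), invnum σ ≤ m → ∀ (j : ℕ) (h : j + 1 < n)
      (x : Fin n → α), invnum (σ * sw j h) = invnum σ + 1 →
      Y (σ * sw j h) x = Y σ (x ∘ sw j h) * Ygen j h (x ⟨j, by omega⟩) (x ⟨j + 1, h⟩) := by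
  intro m
  induction m using Nat.strong_induction_on with
  | _ m IH =>
  intro σ hσm j h x hlen
  by_cases h1 : σ = 1
  · subst h1
    have hc : invnum (sw j h * 1) = invnum (1 : Equiv.Perm (Fin n)) + 1 := by
      rw [mul_one]
      rw [one_mul] at hlen
      exact hlen
    have hstep := hY.2 j h 1 x hc
    rw [mul_one] at hstep
    rw [one_mul, hstep, hY.1, hY.1, one_mul, mul_one]
    simp
  · obtain ⟨i, hi, hdesc⟩ := exists_descent σ⁻¹ (fun e => h1 (inv_eq_one.mp e))
    obtain ⟨π, hσdec⟩ : ∃ π, σ = sw i hi * π := ⟨sw i hi * σ, (sw_mul_sw hi σ).symm⟩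
    have hπeq : π = sw i hi * σ := by rw [hσdec, sw_mul_sw]
    have hπinv : π⁻¹ (⟨i, by omega⟩ : Fin n) < π⁻¹ ⟨i + 1, hi⟩ := by
      have e1 : π⁻¹ = σ⁻¹ * sw i hi := by rw [hπeq, mul_inv_rev, sw_inv]
      rw [e1]
      simpa [Equiv.Perm.mul_apply, sw_apply_left hi, sw_apply_right hi] using hdesc
    have hσlen : invnum σ = invnum π + 1 := by
      rw [hσdec]; exact invnum_sw_mul hi π hπinv
    rw [hσdec] at hlen ⊢
    have hπsw : invnum (π * sw j h) = invnum π + 1 := by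
      have e2 : invnum (sw i hi * (π * sw j h)) = invnum π + 2 := by
        rw [← mul_assoc, hlen, ← hσdec, hσlen]
      have e4 : invnum (π * sw j h) = invnum (sw j h * π⁻¹) := by
        rw [← invnum_inv (π * sw j h), mul_inv_rev, sw_inv]
      have e5 := invnum_inv π
      rcases invnum_sw_mul_cases hi (π * sw j h) with hc1 | hc1 <;>
        rcases invnum_sw_mul_cases h π⁻¹ with hc2 | hc2 <;> omega
    have hYρ := hY.2 i hi (π * sw j h) x (by
      rw [← mul_assoc, hlen, ← hσdec, hσlen, hπsw])
    have hIHπ := IH (invnum π) (by omega) π le_rfl j h x hπsw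
    have hYσ' := hY.2 i hi π (x ∘ sw j h) (by rw [← hσdec]; exact hσlen)
    have harg : ∀ v : Fin n, (π * sw j h)⁻¹ v = sw j h (π⁻¹ v) := by
      intro v
      rw [mul_inv_rev, sw_inv]
      rfl
    rw [mul_assoc, hYρ, hIHπ, hYσ', mul_assoc]
    simp only [harg, Function.comp_apply]

lemma phi_Ygen {α : Type*} [LinearOrder α] (φ : H n →ₐ[ℂ] (H n)ᵐᵒᵖ)
    (hφ : ∀ i, φ (Tgen i) = MulOpposite.op (Tgen i)) {j : ℕ} (h : j + 1 < n) (t u : α) :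
    φ (Ygen j h t u) = MulOpposite.op (Ygen j h t u) := by
  unfold Ygen Tpos
  split_ifs <;> simp [hφ]

lemma main_aux {Y : Equiv.Perm (Fin n) → (Fin n → Fin n) → H n} (hY : IsYBFamily Y)
    (φ : H n →ₐ[ℂ] (H n)ᵐᵒᵖ) (hφ : ∀ i, φ (Tgen i) = MulOpposite.op (Tgen i))
    (τ : Equiv.Perm (Fin n)) :
    ∀ (m : ℕ) (σ : Equiv.Perm (Fin n)), invnum σ ≤ m →
      (φ (Y σ ⇑τ)).unop = Y σ⁻¹ (fun v => Fin.rev (τ (σ⁻¹ v))) := by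
  intro m
  induction m using Nat.strong_induction_on with
  | _ m IH =>
  intro σ hσm
  by_cases h1 : σ = 1
  · subst h1
    simp [hY.1, map_one]
  · obtain ⟨i, hi, hdesc⟩ := exists_descent σ⁻¹ (fun e => h1 (inv_eq_one.mp e))
    obtain ⟨π, hσdec⟩ : ∃ π, σ = sw i hi * π := ⟨sw i hi * σ, (sw_mul_sw hi σ).symm⟩
    have hπeq : π = sw i hi * σ := by rw [hσdec, sw_mul_sw]
    have hπinv : π⁻¹ (⟨i, by omega⟩ : Fin n) < π⁻¹ ⟨i + 1, hi⟩ := by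
      have e1 : π⁻¹ = σ⁻¹ * sw i hi := by rw [hπeq, mul_inv_rev, sw_inv]
      rw [e1]
      simpa [Equiv.Perm.mul_apply, sw_apply_left hi, sw_apply_right hi] using hdesc
    have hσlen : invnum σ = invnum π + 1 := by
      rw [hσdec]; exact invnum_sw_mul hi π hπinv
    rw [hσdec] at hσm ⊢
    have hstep := hY.2 i hi π ⇑τ (by rw [← hσdec]; exact hσlen)
    have hIHπ := IH (invnum π)
      (by have := invnum_sw_mul hi π hπinv; omega) π le_rfl
    rw [hstep, map_mul, MulOpposite.unop_mul, hIHπ,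
      phi_Ygen φ hφ hi (τ (π⁻¹ ⟨i, by omega⟩)) (τ (π⁻¹ ⟨i + 1, hi⟩)), MulOpposite.unop_op]
    have hinv : (sw i hi * π)⁻¹ = π⁻¹ * sw i hi := by rw [mul_inv_rev, sw_inv]
    rw [hinv]
    have hcond : invnum (π⁻¹ * sw i hi) = invnum π⁻¹ + 1 := by
      have : invnum (π⁻¹ * sw i hi) = invnum (sw i hi * π) := by
        rw [← invnum_inv (π⁻¹ * sw i hi), mul_inv_rev, sw_inv, inv_inv]
      rw [this, ← hσdec, hσlen, invnum_inv]
    have hR := Y_right hY (invnum π⁻¹) π⁻¹ le_rfl i hi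
      (fun v => Fin.rev (τ ((π⁻¹ * sw i hi) v))) hcond
    rw [hR]
    congr 1
    · congr 1
      funext v
      simp [Equiv.Perm.mul_apply, sw_sw]
    · simp only [Equiv.Perm.mul_apply, sw_apply_left hi, sw_apply_right hi]
      exact (Ygen_rev hi _ _).symm


theorem antiAutomorphism_of_yangBaxter (n : ℕ)
    (Y : Equiv.Perm (Fin n) → (Fin n → Fin n) → H n) (hY : IsYBFamily Y)
    (φ : H n →ₐ[ℂ] (H n)ᵐᵒᵖ) (hφ : ∀ i, φ (Tgen i) = MulOpposite.op (Tgen i))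
    (σ τ : Equiv.Perm (Fin n)) :
    φ (Y σ ⇑τ) =
      MulOpposite.op
        (Y σ⁻¹ ⇑(((Fin.revPerm * (τ * Fin.revPerm)) * (Fin.revPerm * σ⁻¹) : Equiv.Perm (Fin n)))) := by
  have key := main_aux hY φ hφ τ (invnum σ) σ le_rfl
  have hw : ⇑((Fin.revPerm * (τ * Fin.revPerm)) * (Fin.revPerm * σ⁻¹) : Equiv.Perm (Fin n)) =
      fun v => Fin.rev (τ (σ⁻¹ v)) := by
    funext v
    simp [Equiv.Perm.mul_apply, Fin.rev_rev]
  rw [hw, ← key, MulOpposite.op_unop]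


end

end AKSPaper
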